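/- Under Condition J ≫ λ,h > 0, L > (2J/(λ-h))³ (and non-degeneracy of certain ratios), the homogeneous plus configuration +1 is the unique ground state of the Blume–Capel Hamiltonian with zero-boundary conditions, i.e., H(+1) < H(η) for all η ≠ +1. -/

import Mathlib

open Finset

noncomputable section

def Lam (L : ℕ) : Finset (ℤ × ℤ) := Finset.Icc 1 (L : ℤ) ×ˢ Finset.Icc 1 (L : ℤ)

/-- The Blume–Capel Hamiltonian with zero-boundary conditions on `Λ = {1,…,L}²`. -/
noncomputable def H (L : ℕ) (J lam h : ℝ) (η : ℤ × ℤ → ℤ) : ℝ :=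
  J / 2 * ∑ i ∈ Lam L, ∑ j ∈ Lam L,
      (if (i.1 - j.1) ^ 2 + (i.2 - j.2) ^ 2 = 1 then ((η i : ℝ) - (η j : ℝ)) ^ 2 else 0)
    + J * ∑ i ∈ Lam L,
        ((4 : ℝ) - (((Lam L).filter fun j => (i.1 - j.1) ^ 2 + (i.2 - j.2) ^ 2 = 1)).card)
          * (η i : ℝ) ^ 2
    - lam * ∑ i ∈ Lam L, (η i : ℝ) ^ 2
    - h * ∑ i ∈ Lam L, (η i : ℝ)

/-- A configuration takes values in `{-1,0,+1}`. -/
def validCfg (η : ℤ × ℤ → ℤ) : Prop := ∀ i, η i = -1 ∨ η i = 0 ∨ η i = 1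

/-- Two configurations are communicating if they differ at most at one site. -/
def commStep (η η' : ℤ × ℤ → ℤ) : Prop := ∃ i, ∀ j, j ≠ i → η j = η' j

/-! ### Auxiliary lemmas -/

lemma BC_sq_add_sq_eq_one {a b : ℤ} (h : a^2 + b^2 = 1) :
    (a = 1 ∧ b = 0) ∨ (a = -1 ∧ b = 0) ∨ (a = 0 ∧ b = 1) ∨ (a = 0 ∧ b = -1) := by
  have h1 : a^2 ≤ 1 := by nlinarith [sq_nonneg b]
  have h2 : b^2 ≤ 1 := by nlinarith [sq_nonneg a]
  have h3a : -1 ≤ a := by nlinarith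
  have h3b : a ≤ 1 := by nlinarith
  have h4a : -1 ≤ b := by nlinarith
  have h4b : b ≤ 1 := by nlinarith
  interval_cases a <;> interval_cases b <;> revert h <;> norm_num

lemma BC_sum_nn (L : ℕ) (i : ℤ × ℤ) (F : ℤ × ℤ → ℝ) :
    (∑ j ∈ Lam L, if (i.1 - j.1)^2 + (i.2 - j.2)^2 = 1 then F j else 0)
    = (if (i.1+1, i.2) ∈ Lam L then F (i.1+1, i.2) else 0)
      + (if (i.1-1, i.2) ∈ Lam L then F (i.1-1, i.2) else 0)
      + (if (i.1, i.2+1) ∈ Lam L then F (i.1, i.2+1) else 0)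
      + (if (i.1, i.2-1) ∈ Lam L then F (i.1, i.2-1) else 0) := by
  have key : ∀ j ∈ Lam L, (if (i.1 - j.1)^2 + (i.2 - j.2)^2 = 1 then F j else 0)
      = (if j = (i.1+1, i.2) then F j else 0) + (if j = (i.1-1, i.2) then F j else 0)
        + (if j = (i.1, i.2+1) then F j else 0) + (if j = (i.1, i.2-1) then F j else 0) := by
    intro j _
    by_cases hnn : (i.1 - j.1)^2 + (i.2 - j.2)^2 = 1
    · rw [if_pos hnn]
      rcases BC_sq_add_sq_eq_one hnn with ⟨u, v⟩ | ⟨u, v⟩ | ⟨u, v⟩ | ⟨u, v⟩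
      · have hj : j = (i.1 - 1, i.2) := Prod.ext_iff.mpr ⟨by omega, by omega⟩
        rw [hj, if_neg (by simp only [Prod.mk.injEq]; omega), if_pos rfl,
          if_neg (by simp only [Prod.mk.injEq]; omega),
          if_neg (by simp only [Prod.mk.injEq]; omega)]
        ring
      · have hj : j = (i.1 + 1, i.2) := Prod.ext_iff.mpr ⟨by omega, by omega⟩
        rw [hj, if_pos rfl, if_neg (by simp only [Prod.mk.injEq]; omega),
          if_neg (by simp only [Prod.mk.injEq]; omega),
          if_neg (by simp only [Prod.mk.injEq]; omega)]
        ring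
      · have hj : j = (i.1, i.2 - 1) := Prod.ext_iff.mpr ⟨by omega, by omega⟩
        rw [hj, if_neg (by simp only [Prod.mk.injEq]; omega),
          if_neg (by simp only [Prod.mk.injEq]; omega),
          if_neg (by simp only [Prod.mk.injEq]; omega), if_pos rfl]
        ring
      · have hj : j = (i.1, i.2 + 1) := Prod.ext_iff.mpr ⟨by omega, by omega⟩
        rw [hj, if_neg (by simp only [Prod.mk.injEq]; omega),
          if_neg (by simp only [Prod.mk.injEq]; omega),
          if_pos rfl, if_neg (by simp only [Prod.mk.injEq]; omega)]
        ring
    · rw [if_neg hnn]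
      have c1 : j ≠ (i.1+1, i.2) := by rintro rfl; apply hnn; simp
      have c2 : j ≠ (i.1-1, i.2) := by rintro rfl; apply hnn; simp
      have c3 : j ≠ (i.1, i.2+1) := by rintro rfl; apply hnn; simp
      have c4 : j ≠ (i.1, i.2-1) := by rintro rfl; apply hnn; simp
      rw [if_neg c1, if_neg c2, if_neg c3, if_neg c4]; ring
  rw [Finset.sum_congr rfl key]
  simp only [Finset.sum_add_distrib, Finset.sum_ite_eq']

lemma BC_icc_filter_le (N : ℤ) : (Icc (1:ℤ) N).filter (fun a => a + 1 ≤ N) = Icc 1 (N-1) := by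
  ext a; simp only [mem_filter, mem_Icc]; omega

lemma BC_icc_filter_ge (N : ℤ) : (Icc (1:ℤ) N).filter (fun a => 2 ≤ a) = Icc 2 N := by
  ext a; simp only [mem_filter, mem_Icc]; omega

lemma BC_rowCalc (L : ℕ) (hL : 1 ≤ L) (y : ℤ → ℝ) :
    ∑ a ∈ Icc (1:ℤ) (L:ℤ), ((if a + 1 ≤ (L:ℤ) then (y a - y (a+1))^2 else 0)/2
      + (if 2 ≤ a then (y a - y (a-1))^2 else 0)/2
      + (if a + 1 ≤ (L:ℤ) then 0 else y a^2)
      + (if 2 ≤ a then 0 else y a^2))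
    = y 1^2 + y (L:ℤ)^2 + ∑ a ∈ Icc (1:ℤ) ((L:ℤ)-1), (y (a+1) - y a)^2 := by
  have hL1 : (1:ℤ) ≤ (L:ℤ) := by exact_mod_cast hL
  simp only [Finset.sum_add_distrib, ← Finset.sum_div]
  have e1 : ∑ a ∈ Icc (1:ℤ) (L:ℤ), (if a + 1 ≤ (L:ℤ) then (y a - y (a+1))^2 else 0)
      = ∑ a ∈ Icc (1:ℤ) ((L:ℤ)-1), (y (a+1) - y a)^2 := by
    rw [← Finset.sum_filter, BC_icc_filter_le]
    exact Finset.sum_congr rfl fun a _ => by ring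
  have e2 : ∑ a ∈ Icc (1:ℤ) (L:ℤ), (if 2 ≤ a then (y a - y (a-1))^2 else 0)
      = ∑ a ∈ Icc (1:ℤ) ((L:ℤ)-1), (y (a+1) - y a)^2 := by
    rw [← Finset.sum_filter, BC_icc_filter_ge,
      show Icc (2:ℤ) (L:ℤ) = Icc ((1:ℤ)+1) (((L:ℤ)-1)+1) by norm_num,
      ← Finset.map_add_right_Icc, Finset.sum_map]
    exact Finset.sum_congr rfl fun a _ => by simp [addRightEmbedding]
  have e3 : ∑ a ∈ Icc (1:ℤ) (L:ℤ), (if a + 1 ≤ (L:ℤ) then 0 else y a^2) = y (L:ℤ)^2 := by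
    have key : ∀ a ∈ Icc (1:ℤ) (L:ℤ), (if a + 1 ≤ (L:ℤ) then 0 else y a^2)
        = (if a = (L:ℤ) then y a^2 else 0) := by
      intro a ha; simp only [mem_Icc] at ha
      split_ifs <;> first | rfl | omega
    rw [Finset.sum_congr rfl key, Finset.sum_ite_eq', if_pos (by simp [mem_Icc]; omega)]
  have e4 : ∑ a ∈ Icc (1:ℤ) (L:ℤ), (if 2 ≤ a then 0 else y a^2) = y 1^2 := by
    have key : ∀ a ∈ Icc (1:ℤ) (L:ℤ), (if 2 ≤ a then 0 else y a^2)
        = (if a = 1 then y a^2 else 0) := by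
      intro a ha; simp only [mem_Icc] at ha
      split_ifs <;> first | rfl | omega
    rw [Finset.sum_congr rfl key, Finset.sum_ite_eq', if_pos (by simp [mem_Icc]; omega)]
  rw [e1, e2, e3, e4]; ring

lemma BC_telescope (y : ℤ → ℤ) (a : ℤ) (n : ℕ) :
    ∑ k ∈ Icc a (a + n - 1), (y (k+1) - y k) = y (a + n) - y a := by
  induction n with
  | zero => rw [Finset.Icc_eq_empty (by omega)]; simp
  | succ m ih =>
    have hset : Icc a (a + (m+1:ℕ) - 1) = insert (a + m) (Icc a (a + m - 1)) := by
      ext k; simp only [mem_insert, mem_Icc]; push_cast; omega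
    rw [hset, Finset.sum_insert (by simp only [mem_Icc]; omega), ih]
    push_cast; ring

lemma BC_tele_abs (y : ℤ → ℤ) (a b : ℤ) (hab : a ≤ b) :
    |y b - y a| ≤ ∑ k ∈ Icc a (b - 1), |y (k+1) - y k| := by
  have hn : b = a + ((b - a).toNat : ℤ) := by omega
  calc |y b - y a| = |∑ k ∈ Icc a (b-1), (y (k+1) - y k)| := by
        rw [show b - 1 = a + ((b-a).toNat:ℤ) - 1 by omega, BC_telescope, ← hn]
    _ ≤ _ := Finset.abs_sum_le_sum_abs _ _

lemma BC_chain_lb (N : ℕ) (y : ℤ → ℤ) (a0 : ℤ) (h1 : 1 ≤ a0) (h2 : a0 ≤ (N:ℤ))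
    (hy : y a0 ≠ 0) :
    2 ≤ (y 1)^2 + (y (N:ℤ))^2 + ∑ a ∈ Icc (1:ℤ) ((N:ℤ)-1), (y (a+1) - y a)^2 := by
  have habs : ∀ m : ℤ, |m| ≤ m^2 := by
    intro m
    rcases abs_cases m with ⟨h, _⟩ | ⟨h, _⟩ <;> nlinarith [abs_nonneg m]
  have hsplit : Icc (1:ℤ) ((N:ℤ)-1) = Icc 1 (a0-1) ∪ Icc a0 ((N:ℤ)-1) := by
    ext k; simp only [mem_union, mem_Icc]; omega
  have hdisj : Disjoint (Icc (1:ℤ) (a0-1)) (Icc a0 ((N:ℤ)-1)) := by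
    rw [Finset.disjoint_left]; intro k hk hk'
    simp only [mem_Icc] at hk hk'; omega
  have hsum : ∑ a ∈ Icc (1:ℤ) ((N:ℤ)-1), (y (a+1) - y a)^2
      ≥ ∑ a ∈ Icc (1:ℤ) (a0-1), |y (a+1) - y a|
        + ∑ a ∈ Icc a0 ((N:ℤ)-1), |y (a+1) - y a| := by
    rw [hsplit, Finset.sum_union hdisj]
    gcongr <;> exact habs _
  have t1 : |y a0 - y 1| ≤ ∑ a ∈ Icc (1:ℤ) (a0-1), |y (a+1) - y a| := BC_tele_abs y 1 a0 h1
  have t2 : |y (N:ℤ) - y a0| ≤ ∑ a ∈ Icc a0 ((N:ℤ)-1), |y (a+1) - y a| := BC_tele_abs y a0 N h2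
  have k1 : |y a0| - |y 1| ≤ |y a0 - y 1| := abs_sub_abs_le_abs_sub _ _
  have k2 : |y a0| - |y (N:ℤ)| ≤ |y (N:ℤ) - y a0| := by
    rw [abs_sub_comm]; exact abs_sub_abs_le_abs_sub _ _
  have hge : 1 ≤ |y a0| := by
    rcases abs_cases (y a0) with ⟨h, _⟩ | ⟨h, _⟩ <;> omega
  have b1 := habs (y 1)
  have b2 := habs (y (N:ℤ))
  linarith

noncomputable def rowT (L : ℕ) (η : ℤ × ℤ → ℤ) (b : ℤ) : ℝ :=
  (η (1, b) : ℝ)^2 + (η ((L:ℤ), b) : ℝ)^2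
    + ∑ a ∈ Icc (1:ℤ) ((L:ℤ)-1), ((η (a+1, b) : ℝ) - (η (a, b) : ℝ))^2

noncomputable def colT (L : ℕ) (η : ℤ × ℤ → ℤ) (a : ℤ) : ℝ :=
  (η (a, 1) : ℝ)^2 + (η (a, (L:ℤ)) : ℝ)^2
    + ∑ b ∈ Icc (1:ℤ) ((L:ℤ)-1), ((η (a, b+1) : ℝ) - (η (a, b) : ℝ))^2

lemma BC_deg_eq (L : ℕ) (i : ℤ × ℤ) :
    ((((Lam L).filter fun j => (i.1 - j.1) ^ 2 + (i.2 - j.2) ^ 2 = 1)).card : ℝ)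
    = (if (i.1+1, i.2) ∈ Lam L then (1:ℝ) else 0)
      + (if (i.1-1, i.2) ∈ Lam L then (1:ℝ) else 0)
      + (if (i.1, i.2+1) ∈ Lam L then (1:ℝ) else 0)
      + (if (i.1, i.2-1) ∈ Lam L then (1:ℝ) else 0) := by
  rw [Finset.card_filter]
  push_cast
  rw [BC_sum_nn L i (fun _ => (1:ℝ))]

lemma BC_H_eq (L : ℕ) (hL : 1 ≤ L) (J lam h : ℝ) (η : ℤ × ℤ → ℤ) :
    H L J lam h η
    = J * ((∑ b ∈ Icc (1:ℤ) (L:ℤ), rowT L η b) + ∑ a ∈ Icc (1:ℤ) (L:ℤ), colT L η a)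
      - lam * ∑ i ∈ Lam L, (η i : ℝ)^2 - h * ∑ i ∈ Lam L, (η i : ℝ) := by
  unfold H
  rw [sub_left_inj, sub_left_inj]
  have step1 : ∀ i ∈ Lam L,
      (∑ j ∈ Lam L, if (i.1 - j.1)^2 + (i.2 - j.2)^2 = 1 then ((η i:ℝ) - (η j:ℝ))^2 else 0)
      = (if (i.1+1, i.2) ∈ Lam L then ((η i:ℝ) - (η (i.1+1, i.2):ℝ))^2 else 0)
        + (if (i.1-1, i.2) ∈ Lam L then ((η i:ℝ) - (η (i.1-1, i.2):ℝ))^2 else 0)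
        + (if (i.1, i.2+1) ∈ Lam L then ((η i:ℝ) - (η (i.1, i.2+1):ℝ))^2 else 0)
        + (if (i.1, i.2-1) ∈ Lam L then ((η i:ℝ) - (η (i.1, i.2-1):ℝ))^2 else 0) :=
    fun i _ => BC_sum_nn L i _
  have step2 : ∀ i ∈ Lam L,
      ((4 : ℝ) - (((Lam L).filter fun j => (i.1 - j.1) ^ 2 + (i.2 - j.2) ^ 2 = 1)).card)
          * (η i : ℝ) ^ 2
      = (if (i.1+1, i.2) ∈ Lam L then 0 else (η i:ℝ)^2)
        + (if (i.1-1, i.2) ∈ Lam L then 0 else (η i:ℝ)^2)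
        + (if (i.1, i.2+1) ∈ Lam L then 0 else (η i:ℝ)^2)
        + (if (i.1, i.2-1) ∈ Lam L then 0 else (η i:ℝ)^2) := by
    intro i _
    rw [BC_deg_eq]
    split_ifs <;> ring
  rw [Finset.sum_congr rfl step1, Finset.sum_congr rfl step2]
  have hH : (∑ i ∈ Lam L,
      ((if (i.1+1, i.2) ∈ Lam L then ((η i:ℝ) - (η (i.1+1, i.2):ℝ))^2 else 0)/2
        + (if (i.1-1, i.2) ∈ Lam L then ((η i:ℝ) - (η (i.1-1, i.2):ℝ))^2 else 0)/2
        + (if (i.1+1, i.2) ∈ Lam L then 0 else (η i:ℝ)^2)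
        + (if (i.1-1, i.2) ∈ Lam L then 0 else (η i:ℝ)^2)))
      = ∑ b ∈ Icc (1:ℤ) (L:ℤ), rowT L η b := by
    rw [show Lam L = Finset.Icc 1 (L:ℤ) ×ˢ Finset.Icc 1 (L:ℤ) from rfl, Finset.sum_product]
    rw [Finset.sum_comm]
    refine Finset.sum_congr rfl fun b hb => ?_
    unfold rowT
    rw [← BC_rowCalc L hL (fun a => (η (a, b) : ℝ))]
    refine Finset.sum_congr rfl fun a ha => ?_
    simp only [mem_Icc] at ha hb
    have h1 : (((a, b).1 + 1, (a, b).2) ∈ Finset.Icc 1 (L:ℤ) ×ˢ Finset.Icc 1 (L:ℤ))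
        ↔ (a + 1 ≤ (L:ℤ)) := by
      simp only [Finset.mem_product, Finset.mem_Icc]; omega
    have h2 : (((a, b).1 - 1, (a, b).2) ∈ Finset.Icc 1 (L:ℤ) ×ˢ Finset.Icc 1 (L:ℤ))
        ↔ (2 ≤ a) := by
      simp only [Finset.mem_product, Finset.mem_Icc]; omega
    simp only [h1, h2]
  have hV : (∑ i ∈ Lam L,
      ((if (i.1, i.2+1) ∈ Lam L then ((η i:ℝ) - (η (i.1, i.2+1):ℝ))^2 else 0)/2
        + (if (i.1, i.2-1) ∈ Lam L then ((η i:ℝ) - (η (i.1, i.2-1):ℝ))^2 else 0)/2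
        + (if (i.1, i.2+1) ∈ Lam L then 0 else (η i:ℝ)^2)
        + (if (i.1, i.2-1) ∈ Lam L then 0 else (η i:ℝ)^2)))
      = ∑ a ∈ Icc (1:ℤ) (L:ℤ), colT L η a := by
    rw [show Lam L = Finset.Icc 1 (L:ℤ) ×ˢ Finset.Icc 1 (L:ℤ) from rfl, Finset.sum_product]
    refine Finset.sum_congr rfl fun a ha => ?_
    unfold colT
    rw [← BC_rowCalc L hL (fun b => (η (a, b) : ℝ))]
    refine Finset.sum_congr rfl fun b hb => ?_
    simp only [mem_Icc] at ha hb
    have h1 : (((a, b).1, (a, b).2 + 1) ∈ Finset.Icc 1 (L:ℤ) ×ˢ Finset.Icc 1 (L:ℤ))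
        ↔ (b + 1 ≤ (L:ℤ)) := by
      simp only [Finset.mem_product, Finset.mem_Icc]; omega
    have h2 : (((a, b).1, (a, b).2 - 1) ∈ Finset.Icc 1 (L:ℤ) ×ˢ Finset.Icc 1 (L:ℤ))
        ↔ (2 ≤ b) := by
      simp only [Finset.mem_product, Finset.mem_Icc]; omega
    simp only [h1, h2]
  rw [← hH, ← hV]
  simp only [Finset.sum_add_distrib, ← Finset.sum_div]
  ring

noncomputable def gain (lam h : ℝ) (η : ℤ × ℤ → ℤ) (i : ℤ × ℤ) : ℝ :=
  lam * (1 - (η i : ℝ)^2) + h * (1 - (η i : ℝ))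

set_option maxHeartbeats 2000000 in
theorem plus_is_unique_ground_state (L : ℕ) (J lam h : ℝ)
    (hh : 0 < h) (hhl : h < lam) (hJ : 10 * lam < J)
    (hL : (L : ℝ) > (2 * J / (lam - h)) ^ 3)
    (hnd1 : ∀ n : ℤ, 2 * J / (lam + h) ≠ n)
    (hnd2 : ∀ n : ℤ, 2 * J / (lam - h) ≠ n)
    (hnd3 : ∀ n : ℤ, (2 * J + lam - h) / (lam + h) ≠ n)
    (hnd4 : ∀ n : ℤ, (J + lam + h) / h ≠ n) :
    ∀ η : ℤ × ℤ → ℤ, validCfg η → (∃ i ∈ Lam L, η i ≠ 1) →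
      H L J lam h (fun _ => 1) < H L J lam h η := by
  classical
  intro η hval hex
  obtain ⟨i0, hi0, hi0ne⟩ := hex
  have hlam : 0 < lam := hh.trans hhl
  have hJpos : 0 < J := by linarith
  have hu : (0:ℝ) < lam - h := by linarith
  set t : ℝ := 2 * J / (lam - h) with htdef
  have htpos : 0 < t := by positivity
  have ht2 : t * (lam - h) = 2 * J := div_mul_cancel₀ _ (ne_of_gt hu)
  have ht20 : (20:ℝ) < t := by
    rw [htdef, lt_div_iff₀ hu]; nlinarith
  have hL8000 : (8000:ℝ) < (L:ℝ) := by
    nlinarith [mul_pos (sub_pos.mpr ht20) (mul_pos htpos htpos), sq_nonneg (t - 20), hL]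
  have hL1 : 1 ≤ L := by exact_mod_cast show (1:ℝ) ≤ (L:ℝ) by linarith
  have hL1R : (1:ℝ) ≤ (L:ℝ) := by linarith
  have hkey : 4 * J < (lam + h) * (L:ℝ) := by
    have hc1 : (lam + h) * t^3 < (lam + h) * (L:ℝ) :=
      mul_lt_mul_of_pos_left hL (by linarith)
    have h400 : (400:ℝ) < t^2 := by nlinarith
    have hstep : (0:ℝ) < (lam + h) * t^2 - 2 * (lam - h) := by
      nlinarith [mul_pos hu (show (0:ℝ) < t^2 - 400 by linarith), mul_nonneg hh.le (sq_nonneg t)]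
    have hc2 : 4 * J ≤ (lam + h) * t^3 := by nlinarith [mul_pos htpos hstep, ht2]
    linarith
  have hIcard : (Icc (1:ℤ) (L:ℤ)).card = L := by
    rw [Int.card_Icc]; omega
  have hcard2 : (((Lam L).card : ℝ)) = (L:ℝ)^2 := by
    rw [show Lam L = Finset.Icc 1 (L:ℤ) ×ˢ Finset.Icc 1 (L:ℤ) from rfl,
      Finset.card_product, hIcard]
    push_cast; ring
  -- the nonzero rows and columns
  set R : Finset ℤ := (Icc (1:ℤ) (L:ℤ)).filter (fun b => ∃ a ∈ Icc (1:ℤ) (L:ℤ), η (a, b) ≠ 0)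
    with hRdef
  set C : Finset ℤ := (Icc (1:ℤ) (L:ℤ)).filter (fun a => ∃ b ∈ Icc (1:ℤ) (L:ℤ), η (a, b) ≠ 0)
    with hCdef
  have hRle : R.card ≤ L := by
    rw [← hIcard]; exact Finset.card_le_card (Finset.filter_subset _ _)
  have hCle : C.card ≤ L := by
    rw [← hIcard]; exact Finset.card_le_card (Finset.filter_subset _ _)
  -- row sums bounded below
  have hSr : 2 * (R.card : ℝ) ≤ ∑ b ∈ Icc (1:ℤ) (L:ℤ), rowT L η b := by
    have : 2 * (R.card : ℝ) = ∑ b ∈ Icc (1:ℤ) (L:ℤ),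
        (if (∃ a ∈ Icc (1:ℤ) (L:ℤ), η (a, b) ≠ 0) then (2:ℝ) else 0) := by
      rw [← Finset.sum_filter, ← hRdef, Finset.sum_const, nsmul_eq_mul]; ring
    rw [this]
    refine Finset.sum_le_sum fun b hb => ?_
    by_cases hp : ∃ a ∈ Icc (1:ℤ) (L:ℤ), η (a, b) ≠ 0
    · rw [if_pos hp]
      obtain ⟨a0, ha0, hne⟩ := hp
      simp only [mem_Icc] at ha0
      have hc := BC_chain_lb L (fun a => η (a, b)) a0 ha0.1 ha0.2 hne
      have hc' : ((2:ℤ):ℝ) ≤ (((η (1, b))^2 + (η ((L:ℤ), b))^2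
          + ∑ a ∈ Icc (1:ℤ) ((L:ℤ)-1), (η (a+1, b) - η (a, b))^2 : ℤ) : ℝ) :=
        Int.cast_le.mpr hc
      push_cast at hc'
      unfold rowT
      exact hc'
    · rw [if_neg hp]
      unfold rowT
      positivity
  have hSc : 2 * (C.card : ℝ) ≤ ∑ a ∈ Icc (1:ℤ) (L:ℤ), colT L η a := by
    have : 2 * (C.card : ℝ) = ∑ a ∈ Icc (1:ℤ) (L:ℤ),
        (if (∃ b ∈ Icc (1:ℤ) (L:ℤ), η (a, b) ≠ 0) then (2:ℝ) else 0) := by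
      rw [← Finset.sum_filter, ← hCdef, Finset.sum_const, nsmul_eq_mul]; ring
    rw [this]
    refine Finset.sum_le_sum fun a ha => ?_
    by_cases hp : ∃ b ∈ Icc (1:ℤ) (L:ℤ), η (a, b) ≠ 0
    · rw [if_pos hp]
      obtain ⟨b0, hb0, hne⟩ := hp
      simp only [mem_Icc] at hb0
      have hc := BC_chain_lb L (fun b => η (a, b)) b0 hb0.1 hb0.2 hne
      have hc' : ((2:ℤ):ℝ) ≤ (((η (a, 1))^2 + (η (a, (L:ℤ)))^2
          + ∑ b ∈ Icc (1:ℤ) ((L:ℤ)-1), (η (a, b+1) - η (a, b))^2 : ℤ) : ℝ) :=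
        Int.cast_le.mpr hc
      push_cast at hc'
      unfold colT
      exact hc'
    · rw [if_neg hp]
      unfold colT
      positivity
  -- gain bounds
  have hg0 : ∀ i, 0 ≤ gain lam h η i := by
    intro i
    rcases hval i with h' | h' | h' <;> simp only [gain, h'] <;> push_cast <;> nlinarith
  have hgsum : ∑ i ∈ Lam L, gain lam h η i
      = lam * (L:ℝ)^2 + h * (L:ℝ)^2
        - lam * ∑ i ∈ Lam L, (η i : ℝ)^2 - h * ∑ i ∈ Lam L, (η i : ℝ) := by
    simp only [gain, Finset.sum_add_distrib, ← Finset.mul_sum, Finset.sum_sub_distrib,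
      Finset.sum_const, nsmul_eq_mul, mul_one]
    rw [hcard2]; ring
  have hGrow : (lam + h) * (L:ℝ) * ((L:ℝ) - R.card) ≤ ∑ i ∈ Lam L, gain lam h η i := by
    have hss : (Icc (1:ℤ) (L:ℤ)) ×ˢ ((Icc (1:ℤ) (L:ℤ)) \ R) ⊆ Lam L :=
      Finset.product_subset_product subset_rfl (Finset.sdiff_subset)
    have hmono := Finset.sum_le_sum_of_subset_of_nonneg hss
      (fun i _ _ => hg0 i)
    have hval0 : ∀ a ∈ Icc (1:ℤ) (L:ℤ), ∀ b ∈ (Icc (1:ℤ) (L:ℤ)) \ R,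
        gain lam h η (a, b) = lam + h := by
      intro a ha b hb
      rw [Finset.mem_sdiff, hRdef, Finset.mem_filter] at hb
      have hz : η (a, b) = 0 := by
        by_contra hcon
        exact hb.2 ⟨hb.1, a, ha, hcon⟩
      simp only [gain, hz]; push_cast; ring
    have hcalc : ∑ i ∈ (Icc (1:ℤ) (L:ℤ)) ×ˢ ((Icc (1:ℤ) (L:ℤ)) \ R), gain lam h η i
        = (lam + h) * (L:ℝ) * ((L:ℝ) - R.card) := by
      rw [Finset.sum_product]
      have inner : ∀ a ∈ Icc (1:ℤ) (L:ℤ),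
          ∑ b ∈ (Icc (1:ℤ) (L:ℤ)) \ R, gain lam h η (a, b) = (L - R.card : ℕ) * (lam + h) := by
        intro a ha
        rw [Finset.sum_congr rfl (hval0 a ha), Finset.sum_const, nsmul_eq_mul,
          Finset.card_sdiff_of_subset (Finset.filter_subset _ _), hIcard]
      rw [Finset.sum_congr rfl inner, Finset.sum_const, nsmul_eq_mul, hIcard,
        Nat.cast_sub hRle]
      push_cast; ring
    rw [← hcalc]; exact hmono
  have hGcol : (lam + h) * (L:ℝ) * ((L:ℝ) - C.card) ≤ ∑ i ∈ Lam L, gain lam h η i := by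
    have hss : ((Icc (1:ℤ) (L:ℤ)) \ C) ×ˢ (Icc (1:ℤ) (L:ℤ)) ⊆ Lam L :=
      Finset.product_subset_product (Finset.sdiff_subset) subset_rfl
    have hmono := Finset.sum_le_sum_of_subset_of_nonneg hss
      (fun i _ _ => hg0 i)
    have hval0 : ∀ a ∈ (Icc (1:ℤ) (L:ℤ)) \ C, ∀ b ∈ Icc (1:ℤ) (L:ℤ),
        gain lam h η (a, b) = lam + h := by
      intro a ha b hb
      rw [Finset.mem_sdiff, hCdef, Finset.mem_filter] at ha
      have hz : η (a, b) = 0 := by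
        by_contra hcon
        exact ha.2 ⟨ha.1, b, hb, hcon⟩
      simp only [gain, hz]; push_cast; ring
    have hcalc : ∑ i ∈ ((Icc (1:ℤ) (L:ℤ)) \ C) ×ˢ (Icc (1:ℤ) (L:ℤ)), gain lam h η i
        = (lam + h) * (L:ℝ) * ((L:ℝ) - C.card) := by
      rw [Finset.sum_product]
      have inner : ∀ a ∈ (Icc (1:ℤ) (L:ℤ)) \ C,
          ∑ b ∈ Icc (1:ℤ) (L:ℤ), gain lam h η (a, b) = (L:ℝ) * (lam + h) := by
        intro a ha
        rw [Finset.sum_congr rfl (hval0 a ha), Finset.sum_const, nsmul_eq_mul, hIcard]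
      rw [Finset.sum_congr rfl inner, Finset.sum_const, nsmul_eq_mul,
        Finset.card_sdiff_of_subset (Finset.filter_subset _ _), hIcard, Nat.cast_sub hCle]
      push_cast; ring
    rw [← hcalc]; exact hmono
  have hG2h : 2 * h ≤ ∑ i ∈ Lam L, gain lam h η i := by
    have hone := Finset.single_le_sum (f := gain lam h η) (fun i _ => hg0 i) hi0
    have : 2 * h ≤ gain lam h η i0 := by
      rcases hval i0 with h' | h' | h'
      · simp only [gain, h']; push_cast; nlinarith
      · simp only [gain, h']; push_cast; nlinarith
      · exact absurd h' hi0ne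
    linarith
  -- the main inequality
  have main : 4 * J * (L:ℝ)
      < J * ((∑ b ∈ Icc (1:ℤ) (L:ℤ), rowT L η b) + ∑ a ∈ Icc (1:ℤ) (L:ℤ), colT L η a)
        + ∑ i ∈ Lam L, gain lam h η i := by
    set Sr := ∑ b ∈ Icc (1:ℤ) (L:ℤ), rowT L η b
    set Sc := ∑ a ∈ Icc (1:ℤ) (L:ℤ), colT L η a
    set G := ∑ i ∈ Lam L, gain lam h η i
    have e1 : J * (2 * (R.card:ℝ)) ≤ J * Sr := mul_le_mul_of_nonneg_left hSr hJpos.le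
    have e2 : J * (2 * (C.card:ℝ)) ≤ J * Sc := mul_le_mul_of_nonneg_left hSc hJpos.le
    by_cases hfull : R.card = L ∧ C.card = L
    · obtain ⟨hr, hc⟩ := hfull
      rw [hr] at e1; rw [hc] at e2
      linarith
    · have hk : (1:ℝ) ≤ ((L:ℝ) - R.card) + ((L:ℝ) - C.card) := by
        have hn : R.card + C.card + 1 ≤ 2 * L := by omega
        have : ((R.card + C.card + 1 : ℕ) : ℝ) ≤ ((2 * L : ℕ) : ℝ) := Nat.cast_le.mpr hn
        push_cast at this
        linarith
      have hkpos : (0:ℝ) < ((L:ℝ) - R.card) + ((L:ℝ) - C.card) := by linarith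
      have hprod : 0 < ((lam + h) * (L:ℝ) - 4 * J) * (((L:ℝ) - R.card) + ((L:ℝ) - C.card)) :=
        mul_pos (by linarith) hkpos
      nlinarith [hprod, e1, e2, hGrow, hGcol]
  -- conclude
  have hHη := BC_H_eq L hL1 J lam h η
  have hH1 := BC_H_eq L hL1 J lam h (fun _ => 1)
  have hrow1 : ∑ b ∈ Icc (1:ℤ) (L:ℤ), rowT L (fun _ => (1:ℤ)) b = 2 * (L:ℝ) := by
    have : ∀ b ∈ Icc (1:ℤ) (L:ℤ), rowT L (fun _ => (1:ℤ)) b = 2 := by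
      intro b _; simp [rowT]; norm_num
    rw [Finset.sum_congr rfl this, Finset.sum_const, hIcard, nsmul_eq_mul]; ring
  have hcol1 : ∑ a ∈ Icc (1:ℤ) (L:ℤ), colT L (fun _ => (1:ℤ)) a = 2 * (L:ℝ) := by
    have : ∀ a ∈ Icc (1:ℤ) (L:ℤ), colT L (fun _ => (1:ℤ)) a = 2 := by
      intro a _; simp [colT]; norm_num
    rw [Finset.sum_congr rfl this, Finset.sum_const, hIcard, nsmul_eq_mul]; ring
  have hQ1 : ∑ i ∈ Lam L, (((fun _ => (1:ℤ)) i : ℝ))^2 = (L:ℝ)^2 := by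
    simp [← hcard2]
  have hM1 : ∑ i ∈ Lam L, (((fun _ => (1:ℤ)) i : ℝ)) = (L:ℝ)^2 := by
    simp [← hcard2]
  rw [hHη, hH1, hrow1, hcol1, hQ1, hM1]
  nlinarith [main, hgsum]
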